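/- Let G be a finite simple graph with vertex set {v_1, ..., v_n}, and let G' be the graph obtained from G by adding, for each i with 1 <= i <= n, three new vertices x_i, z_i, y_i together with the edges x_i z_i, z_i y_i, and z_i v_i (so each vertex v_i receives a pendant path structure in which z_i is adjacent to v_i and to the two new leaves x_i and y_i). Then rho_e^o(G') = 2n + alpha(G). -/

import Mathlib

open scoped Classical

variable {V : Type*}

/-- Two edges `e₁, e₂` have a common edge in `G` if some edge of `G`, different from both,
joins an endvertex of `e₁` to an endvertex of `e₂`. -/
def HasCommonEdge (G : SimpleGraph V) (e₁ e₂ : Sym2 V) : Prop :=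
  ∃ x y : V, x ∈ e₁ ∧ y ∈ e₂ ∧ G.Adj x y ∧ s(x, y) ≠ e₁ ∧ s(x, y) ≠ e₂

/-- `B` is an edge open packing set of `G`: a set of edges of `G` no two distinct members
of which have a common edge in `G`. -/
def IsEOP (G : SimpleGraph V) (B : Set (Sym2 V)) : Prop :=
  B ⊆ G.edgeSet ∧ ∀ e₁ ∈ B, ∀ e₂ ∈ B, e₁ ≠ e₂ → ¬ HasCommonEdge G e₁ e₂

/-- The edge open packing number of `G`: the maximum cardinality of an EOP set of `G`. -/
noncomputable def eopNum (G : SimpleGraph V) : ℕ :=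
  sSup {n | ∃ B : Set (Sym2 V), IsEOP G B ∧ B.ncard = n}

/-- The independence number of `G`. -/
noncomputable def indepNum (G : SimpleGraph V) : ℕ :=
  sSup {n | ∃ I : Set V, (∀ a ∈ I, ∀ b ∈ I, ¬ G.Adj a b) ∧ I.ncard = n}

/-- The graph `G'` obtained from `G` by adding, for every vertex `v`, three new vertices
`x_v = Sum.inr (v, 0)`, `z_v = Sum.inr (v, 1)`, `y_v = Sum.inr (v, 2)` together with the
edges `x_v z_v`, `z_v y_v` and `z_v v`. -/
def primeGraph (G : SimpleGraph V) : SimpleGraph (V ⊕ (V × Fin 3)) where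
  Adj x y := x ≠ y ∧
    ((∃ a b : V, x = Sum.inl a ∧ y = Sum.inl b ∧ G.Adj a b) ∨
     (∃ a : V, (x = Sum.inl a ∧ y = Sum.inr (a, 1)) ∨ (y = Sum.inl a ∧ x = Sum.inr (a, 1))) ∨
     (∃ a : V, (x = Sum.inr (a, 1) ∧ (y = Sum.inr (a, 0) ∨ y = Sum.inr (a, 2))) ∨
               (y = Sum.inr (a, 1) ∧ (x = Sum.inr (a, 0) ∨ x = Sum.inr (a, 2)))))
  symm := ⟨by
    rintro x y ⟨hne, (⟨a, b, rfl, rfl, h⟩ | ⟨a, h⟩ | ⟨a, h⟩)⟩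
    · exact ⟨hne.symm, Or.inl ⟨b, a, rfl, rfl, h.symm⟩⟩
    · exact ⟨hne.symm, Or.inr (Or.inl ⟨a, h.symm⟩)⟩
    · exact ⟨hne.symm, Or.inr (Or.inr ⟨a, h.symm⟩)⟩⟩
  loopless := ⟨fun x h => h.1 rfl⟩

lemma primeGraph_adj (G : SimpleGraph V) (x y : V ⊕ (V × Fin 3)) :
    (primeGraph G).Adj x y ↔ x ≠ y ∧
    ((∃ a b : V, x = Sum.inl a ∧ y = Sum.inl b ∧ G.Adj a b) ∨
     (∃ a : V, (x = Sum.inl a ∧ y = Sum.inr (a, 1)) ∨ (y = Sum.inl a ∧ x = Sum.inr (a, 1))) ∨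
     (∃ a : V, (x = Sum.inr (a, 1) ∧ (y = Sum.inr (a, 0) ∨ y = Sum.inr (a, 2))) ∨
               (y = Sum.inr (a, 1) ∧ (x = Sum.inr (a, 0) ∨ x = Sum.inr (a, 2))))) := Iff.rfl

lemma prime_edge_classify (G : SimpleGraph V) (e : Sym2 (V ⊕ (V × Fin 3)))
    (he : e ∈ (primeGraph G).edgeSet) :
    (∃ a b : V, G.Adj a b ∧ e = s(Sum.inl a, Sum.inl b)) ∨
    (∃ a : V, e = s(Sum.inl a, Sum.inr (a, 1))) ∨
    (∃ a : V, e = s(Sum.inr (a, 1), Sum.inr (a, 0)) ∨ e = s(Sum.inr (a, 1), Sum.inr (a, 2))) := by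
  induction e using Sym2.ind with
  | _ x y =>
    rw [SimpleGraph.mem_edgeSet, primeGraph_adj] at he
    obtain ⟨hne, (⟨a, b, rfl, rfl, h⟩ | ⟨a, (⟨rfl, rfl⟩ | ⟨rfl, rfl⟩)⟩ |
      ⟨a, (⟨rfl, (rfl | rfl)⟩ | ⟨rfl, (rfl | rfl)⟩)⟩)⟩ := he
    · exact Or.inl ⟨a, b, h, rfl⟩
    · exact Or.inr (Or.inl ⟨a, rfl⟩)
    · exact Or.inr (Or.inl ⟨a, Sym2.eq_swap⟩)
    · exact Or.inr (Or.inr ⟨a, Or.inl rfl⟩)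
    · exact Or.inr (Or.inr ⟨a, Or.inr rfl⟩)
    · exact Or.inr (Or.inr ⟨a, Or.inl Sym2.eq_swap⟩)
    · exact Or.inr (Or.inr ⟨a, Or.inr Sym2.eq_swap⟩)

lemma adj_inr0 (G : SimpleGraph V) {a : V} {y : V ⊕ (V × Fin 3)}
    (h : (primeGraph G).Adj (Sum.inr (a, 0)) y) : y = Sum.inr (a, 1) := by
  rw [primeGraph_adj] at h
  obtain ⟨hne, (⟨p, q, hp, _⟩ | ⟨p, (⟨hp, _⟩ | ⟨_, hp⟩)⟩ | ⟨p, (⟨hp, _⟩ | ⟨hy, (hp | hp)⟩)⟩)⟩ := h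
  · exact absurd hp (by simp)
  · exact absurd hp (by simp)
  · simp only [Sum.inr.injEq, Prod.mk.injEq] at hp
    exact absurd hp.2 (by decide)
  · simp only [Sum.inr.injEq, Prod.mk.injEq] at hp
    exact absurd hp.2 (by decide)
  · simp only [Sum.inr.injEq, Prod.mk.injEq] at hp
    obtain ⟨rfl, _⟩ := hp
    exact hy
  · simp only [Sum.inr.injEq, Prod.mk.injEq] at hp
    exact absurd hp.2 (by decide)

lemma adj_inr2 (G : SimpleGraph V) {a : V} {y : V ⊕ (V × Fin 3)}
    (h : (primeGraph G).Adj (Sum.inr (a, 2)) y) : y = Sum.inr (a, 1) := by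
  rw [primeGraph_adj] at h
  obtain ⟨hne, (⟨p, q, hp, _⟩ | ⟨p, (⟨hp, _⟩ | ⟨_, hp⟩)⟩ | ⟨p, (⟨hp, _⟩ | ⟨hy, (hp | hp)⟩)⟩)⟩ := h
  · exact absurd hp (by simp)
  · exact absurd hp (by simp)
  · simp only [Sum.inr.injEq, Prod.mk.injEq] at hp
    exact absurd hp.2 (by decide)
  · simp only [Sum.inr.injEq, Prod.mk.injEq] at hp
    exact absurd hp.2 (by decide)
  · simp only [Sum.inr.injEq, Prod.mk.injEq] at hp
    exact absurd hp.2 (by decide)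
  · simp only [Sum.inr.injEq, Prod.mk.injEq] at hp
    obtain ⟨rfl, _⟩ := hp
    exact hy

lemma adj_inr1 (G : SimpleGraph V) {a : V} {y : V ⊕ (V × Fin 3)}
    (h : (primeGraph G).Adj (Sum.inr (a, 1)) y) :
    y = Sum.inl a ∨ y = Sum.inr (a, 0) ∨ y = Sum.inr (a, 2) := by
  rw [primeGraph_adj] at h
  obtain ⟨hne, (⟨p, q, hp, _⟩ | ⟨p, (⟨hp, _⟩ | ⟨hy, hp⟩)⟩ | ⟨p, (⟨hp, hy⟩ | ⟨hy, (hp | hp)⟩)⟩)⟩ := h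
  · simp_all
  · simp_all
  · simp only [Sum.inr.injEq, Prod.mk.injEq] at hp
    exact Or.inl (by rw [hy, hp.1])
  · simp only [Sum.inr.injEq, Prod.mk.injEq] at hp
    obtain ⟨rfl, _⟩ := hp
    rcases hy with rfl | rfl
    · exact Or.inr (Or.inl rfl)
    · exact Or.inr (Or.inr rfl)
  · simp only [Sum.inr.injEq, Prod.mk.injEq] at hp
    exact absurd hp.2 (by decide)
  · simp only [Sum.inr.injEq, Prod.mk.injEq] at hp
    exact absurd hp.2 (by decide)

lemma adj_inl (G : SimpleGraph V) {a : V} {y : V ⊕ (V × Fin 3)}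
    (h : (primeGraph G).Adj (Sum.inl a) y) :
    (∃ b, y = Sum.inl b ∧ G.Adj a b) ∨ y = Sum.inr (a, 1) := by
  rw [primeGraph_adj] at h
  obtain ⟨hne, (⟨p, q, hp, hq, hadj⟩ | ⟨p, (⟨hp, hy⟩ | ⟨hy, hp⟩)⟩ | ⟨p, (⟨hp, _⟩ | ⟨_, (hp | hp)⟩)⟩)⟩ := h
  · obtain rfl := Sum.inl.inj hp
    exact Or.inl ⟨q, hq, hadj⟩
  · obtain rfl := Sum.inl.inj hp
    exact Or.inr hy
  · simp_all
  · simp_all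
  · simp_all
  · simp_all

def lowB (I : Set V) : Set (Sym2 (V ⊕ (V × Fin 3))) :=
  (Set.range fun a : V => s(Sum.inr (a, 1), Sum.inr (a, 0))) ∪
  (Set.range fun a : V => s(Sum.inr (a, 1), Sum.inr (a, 2))) ∪
  ((fun a : V => s(Sum.inl a, Sum.inr (a, 1))) '' I)

lemma mem_lowB {I : Set V} {e : Sym2 (V ⊕ (V × Fin 3))} :
    e ∈ lowB I ↔ (∃ a : V, e = s(Sum.inr (a, 1), Sum.inr (a, 0))) ∨
      (∃ a : V, e = s(Sum.inr (a, 1), Sum.inr (a, 2))) ∨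
      (∃ a ∈ I, e = s(Sum.inl a, Sum.inr (a, 1))) := by
  simp [lowB, Set.mem_union, Set.mem_range, Set.mem_image, or_assoc, eq_comm]

lemma lowB_eop (G : SimpleGraph V) (I : Set V) (hI : ∀ a ∈ I, ∀ b ∈ I, ¬ G.Adj a b) :
    IsEOP (primeGraph G) (lowB I) := by
  constructor
  · intro e he
    rw [mem_lowB] at he
    obtain (⟨a, rfl⟩ | ⟨a, rfl⟩ | ⟨a, haI, rfl⟩) := he <;>
      rw [SimpleGraph.mem_edgeSet, primeGraph_adj]
    · exact ⟨by simp, Or.inr (Or.inr ⟨a, Or.inl ⟨rfl, Or.inl rfl⟩⟩)⟩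
    · exact ⟨by simp, Or.inr (Or.inr ⟨a, Or.inl ⟨rfl, Or.inr rfl⟩⟩)⟩
    · exact ⟨by simp, Or.inr (Or.inl ⟨a, Or.inl ⟨rfl, rfl⟩⟩)⟩
  · rintro e₁ he₁ e₂ he₂ hne ⟨x, y, hx, hy, hadj, hne1, hne2⟩
    rw [mem_lowB] at he₁ he₂
    obtain (⟨a, rfl⟩ | ⟨a, rfl⟩ | ⟨a, haI, rfl⟩) := he₁ <;>
      obtain (⟨b, rfl⟩ | ⟨b, rfl⟩ | ⟨b, hbI, rfl⟩) := he₂ <;>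
      simp only [Sym2.mem_iff] at hx hy <;>
      rcases hx with rfl | rfl <;> rcases hy with rfl | rfl <;>
      rw [primeGraph_adj] at hadj <;>
      simp_all [Sym2.eq_iff, Prod.ext_iff]

lemma lowB_ncard [Fintype V] (I : Set V) :
    (lowB I).ncard = 2 * Fintype.card V + I.ncard := by
  classical
  have hinj0 : Function.Injective (fun a : V => s(Sum.inr (a, 1), Sum.inr (a, 0)) :
      V → Sym2 (V ⊕ (V × Fin 3))) := by
    intro a b h
    simp [Sym2.eq_iff, Prod.ext_iff] at h
    tauto
  have hinj2 : Function.Injective (fun a : V => s(Sum.inr (a, 1), Sum.inr (a, 2)) :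
      V → Sym2 (V ⊕ (V × Fin 3))) := by
    intro a b h
    simp [Sym2.eq_iff, Prod.ext_iff] at h
    tauto
  have hinjs : Function.Injective (fun a : V => s(Sum.inl a, Sum.inr (a, 1)) :
      V → Sym2 (V ⊕ (V × Fin 3))) := by
    intro a b h
    simp [Sym2.eq_iff, Prod.ext_iff] at h
    tauto
  have hd1 : Disjoint (Set.range fun a : V =>
      (s(Sum.inr (a, 1), Sum.inr (a, 0)) : Sym2 (V ⊕ (V × Fin 3))))
      (Set.range fun a : V =>
      (s(Sum.inr (a, 1), Sum.inr (a, 2)) : Sym2 (V ⊕ (V × Fin 3)))) := by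
    rw [Set.disjoint_left]
    rintro e ⟨a, rfl⟩ ⟨b, h⟩
    simp [Sym2.eq_iff, Prod.ext_iff] at h
  have hd2 : Disjoint ((Set.range fun a : V =>
      (s(Sum.inr (a, 1), Sum.inr (a, 0)) : Sym2 (V ⊕ (V × Fin 3)))) ∪
      (Set.range fun a : V =>
      (s(Sum.inr (a, 1), Sum.inr (a, 2)) : Sym2 (V ⊕ (V × Fin 3)))))
      ((fun a : V =>
      (s(Sum.inl a, Sum.inr (a, 1)) : Sym2 (V ⊕ (V × Fin 3)))) '' I) := by
    rw [Set.disjoint_left]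
    rintro e (⟨a, rfl⟩ | ⟨a, rfl⟩) ⟨b, _, h⟩ <;>
      simp [Sym2.eq_iff, Prod.ext_iff] at h
  simp only [lowB]
  rw [Set.ncard_union_eq hd2 (Set.toFinite _) (Set.toFinite _),
    Set.ncard_union_eq hd1 (Set.toFinite _) (Set.toFinite _)]
  rw [← Set.image_univ, ← Set.image_univ,
    Set.ncard_image_of_injective _ hinj0, Set.ncard_image_of_injective _ hinj2,
    Set.ncard_image_of_injective _ hinjs, Set.ncard_univ, Nat.card_eq_fintype_card]
  ring

lemma indep_bddAbove [Fintype V] (G : SimpleGraph V) :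
    BddAbove {n | ∃ I : Set V, (∀ a ∈ I, ∀ b ∈ I, ¬ G.Adj a b) ∧ I.ncard = n} := by
  refine ⟨Fintype.card V, ?_⟩
  rintro m ⟨I, _, rfl⟩
  calc I.ncard ≤ (Set.univ : Set V).ncard := Set.ncard_le_ncard (Set.subset_univ _) (Set.toFinite _)
  _ = Fintype.card V := by rw [Set.ncard_univ, Nat.card_eq_fintype_card]

lemma eop_bddAbove [Fintype V] (G : SimpleGraph (V ⊕ (V × Fin 3))) :
    BddAbove {n | ∃ B : Set (Sym2 (V ⊕ (V × Fin 3))), IsEOP G B ∧ B.ncard = n} := by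
  refine ⟨Nat.card (Sym2 (V ⊕ (V × Fin 3))), ?_⟩
  rintro m ⟨B, _, rfl⟩
  calc B.ncard ≤ (Set.univ : Set (Sym2 (V ⊕ (V × Fin 3)))).ncard :=
        Set.ncard_le_ncard (Set.subset_univ _) (Set.toFinite _)
  _ = Nat.card _ := Set.ncard_univ _

lemma exists_max_indep [Fintype V] (G : SimpleGraph V) :
    ∃ I : Set V, (∀ a ∈ I, ∀ b ∈ I, ¬ G.Adj a b) ∧ I.ncard = indepNum G := by
  have hne : {n | ∃ I : Set V, (∀ a ∈ I, ∀ b ∈ I, ¬ G.Adj a b) ∧ I.ncard = n}.Nonempty :=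
    ⟨0, ∅, by simp⟩
  have := Nat.sSup_mem hne (indep_bddAbove G)
  obtain ⟨I, hI, hcard⟩ := this
  exact ⟨I, hI, hcard⟩

lemma eop_lower [Fintype V] (G : SimpleGraph V) :
    2 * Fintype.card V + indepNum G ≤ eopNum (primeGraph G) := by
  obtain ⟨I, hI, hcard⟩ := exists_max_indep G
  have : 2 * Fintype.card V + indepNum G ∈
      {n | ∃ B : Set (Sym2 (V ⊕ (V × Fin 3))), IsEOP (primeGraph G) B ∧ B.ncard = n} :=
    ⟨lowB I, lowB_eop G I hI, by rw [lowB_ncard, hcard]⟩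
  exact le_csSup (eop_bddAbove _) this

lemma eop_upper [Fintype V] (G : SimpleGraph V) (B : Set (Sym2 (V ⊕ (V × Fin 3))))
    (hB : IsEOP (primeGraph G) B) :
    B.ncard ≤ 2 * Fintype.card V + indepNum G := by
  classical
  obtain ⟨hsub, hpack⟩ := hB
  set Bm : Set (Sym2 (V ⊕ (V × Fin 3))) :=
    {e ∈ B | ∃ a b : V, G.Adj a b ∧ e = s(Sum.inl a, Sum.inl b)} with hBm_def
  set Bs : Set (Sym2 (V ⊕ (V × Fin 3))) :=
    {e ∈ B | ∃ a : V, e = s(Sum.inl a, Sum.inr (a, 1))} with hBs_def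
  set Bg : Set (Sym2 (V ⊕ (V × Fin 3))) :=
    {e ∈ B | ∃ a : V, e = s(Sum.inr (a, 1), Sum.inr (a, 0)) ∨
      e = s(Sum.inr (a, 1), Sum.inr (a, 2))} with hBg_def
  set T : Set V := {a : V | ∃ b : V, G.Adj a b ∧ s(Sum.inl a, Sum.inl b) ∈ B} with hT_def
  -- B is covered by the three classes
  have hcover : B ⊆ Bm ∪ Bs ∪ Bg := by
    intro e he
    rcases prime_edge_classify G e (hsub he) with ⟨a, b, hab, rfl⟩ | ⟨a, rfl⟩ | ⟨a, h⟩
    · exact Or.inl (Or.inl ⟨he, a, b, hab, rfl⟩)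
    · exact Or.inl (Or.inr ⟨he, a, rfl⟩)
    · exact Or.inr ⟨he, a, h⟩
  -- Claim 1 : gadget edges live over vertices not in T
  have hgadget_notT : ∀ a : V, a ∈ T →
      (s(Sum.inr (a, 1), Sum.inr (a, 0)) ∉ B ∧ s(Sum.inr (a, 1), Sum.inr (a, 2)) ∉ B) := by
    intro a ⟨b, hab, hebB⟩
    constructor <;> intro hgB
    · refine hpack _ hgB _ hebB (by simp [Sym2.eq_iff]) ?_
      exact ⟨Sum.inr (a, 1), Sum.inl a, by simp, by simp,
        ⟨by simp, Or.inr (Or.inl ⟨a, Or.inr ⟨rfl, rfl⟩⟩)⟩,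
        by simp [Sym2.eq_iff], by simp [Sym2.eq_iff]⟩
    · refine hpack _ hgB _ hebB (by simp [Sym2.eq_iff]) ?_
      exact ⟨Sum.inr (a, 1), Sum.inl a, by simp, by simp,
        ⟨by simp, Or.inr (Or.inl ⟨a, Or.inr ⟨rfl, rfl⟩⟩)⟩,
        by simp [Sym2.eq_iff], by simp [Sym2.eq_iff]⟩
  have hBg_card : Bg.ncard ≤ 2 * Tᶜ.ncard := by
    have hsubg : Bg ⊆ ((fun a : V => (s(Sum.inr (a, 1), Sum.inr (a, 0)) :
        Sym2 (V ⊕ (V × Fin 3)))) '' Tᶜ) ∪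
        ((fun a : V => (s(Sum.inr (a, 1), Sum.inr (a, 2)) :
        Sym2 (V ⊕ (V × Fin 3)))) '' Tᶜ) := by
      rintro e ⟨heB, a, (rfl | rfl)⟩
      · refine Or.inl ⟨a, fun haT => (hgadget_notT a haT).1 heB, rfl⟩
      · refine Or.inr ⟨a, fun haT => (hgadget_notT a haT).2 heB, rfl⟩
    calc Bg.ncard ≤ _ := Set.ncard_le_ncard hsubg (Set.toFinite _)
    _ ≤ _ + _ := Set.ncard_union_le _ _
    _ ≤ Tᶜ.ncard + Tᶜ.ncard := by
        gcongr <;> exact Set.ncard_image_le (Set.toFinite _)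
    _ = 2 * Tᶜ.ncard := by ring
  -- Claim 2 : spokes give an independent set
  have hBs_card : Bs.ncard ≤ indepNum G := by
    set S : Set V := {a : V | s(Sum.inl a, Sum.inr (a, 1)) ∈ B} with hS_def
    have hBsim : Bs = (fun a : V => (s(Sum.inl a, Sum.inr (a, 1)) :
        Sym2 (V ⊕ (V × Fin 3)))) '' S := by
      ext e
      constructor
      · rintro ⟨heB, a, rfl⟩; exact ⟨a, heB, rfl⟩
      · rintro ⟨a, haS, rfl⟩; exact ⟨haS, a, rfl⟩
    have hSind : ∀ a ∈ S, ∀ b ∈ S, ¬ G.Adj a b := by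
      intro a haS b hbS hab
      have hne : a ≠ b := G.ne_of_adj hab
      refine hpack _ haS _ hbS (by simp [Sym2.eq_iff, hne]) ?_
      exact ⟨Sum.inl a, Sum.inl b, by simp, by simp,
        ⟨by simp [hne], Or.inl ⟨a, b, rfl, rfl, hab⟩⟩,
        by simp [Sym2.eq_iff], by simp [Sym2.eq_iff]⟩
    have hinj : Function.Injective (fun a : V => (s(Sum.inl a, Sum.inr (a, 1)) :
        Sym2 (V ⊕ (V × Fin 3)))) := by
      intro a b h
      simp [Sym2.eq_iff] at h
      tauto
    rw [hBsim, Set.ncard_image_of_injective _ hinj]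
    exact le_csSup (indep_bddAbove G) ⟨S, hSind, rfl⟩
  -- Claim 3 : G-edges injectively map to T
  have hBm_card : Bm.ncard ≤ T.ncard := by
    rcases Set.eq_empty_or_nonempty Bm with hBme | ⟨e₀, he₀⟩
    · simp [hBme]
    obtain ⟨_, a₀, _, _, _⟩ := he₀
    haveI : Nonempty V := ⟨a₀⟩
    have hdeg1 : ∀ e ∈ Bm, ∃ v : V, Sum.inl v ∈ e ∧
        ∀ e' ∈ Bm, Sum.inl v ∈ e' → e' = e := by
      rintro e ⟨heB, a, b, hab, rfl⟩
      by_contra hcon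
      push_neg at hcon
      obtain ⟨e₁, he₁, hae₁, hne₁⟩ := hcon a (by simp)
      obtain ⟨e₂, he₂, hbe₂, hne₂⟩ := hcon b (by simp)
      have habne : a ≠ b := G.ne_of_adj hab
      have he12 : e₁ ≠ e₂ := by
        rintro rfl
        obtain ⟨_, p, q, _, rfl⟩ := he₁
        simp only [Sym2.mem_iff, Sum.inl.injEq] at hae₁ hbe₂
        apply hne₁
        rcases hae₁ with rfl | rfl <;> rcases hbe₂ with rfl | rfl
        · exact absurd rfl habne
        · rfl
        · exact Sym2.eq_swap
        · exact absurd rfl habne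
      exact hpack _ he₁.1 _ he₂.1 he12
        ⟨Sum.inl a, Sum.inl b, hae₁, hbe₂,
          ⟨by simp [habne], Or.inl ⟨a, b, rfl, rfl, hab⟩⟩, hne₁.symm, hne₂.symm⟩
    set f : Sym2 (V ⊕ (V × Fin 3)) → V := fun e =>
      if h : ∃ v : V, Sum.inl v ∈ e ∧ ∀ e' ∈ Bm, Sum.inl v ∈ e' → e' = e
      then h.choose else Classical.arbitrary V with hf_def
    have hfP : ∀ e ∈ Bm, Sum.inl (f e) ∈ e ∧ ∀ e' ∈ Bm, Sum.inl (f e) ∈ e' → e' = e := by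
      intro e he
      have h := hdeg1 e he
      rw [hf_def]
      simp only [dif_pos h]
      exact h.choose_spec
    apply Set.ncard_le_ncard_of_injOn f
    · intro e he
      obtain ⟨hmem, huniq⟩ := hfP e he
      obtain ⟨heB, a, b, hab, rfl⟩ := he
      simp only [Sym2.mem_iff, Sum.inl.injEq] at hmem
      rcases hmem with h | h
      · rw [hT_def]; rw [h]; exact ⟨b, hab, heB⟩
      · rw [hT_def]; rw [h]; exact ⟨a, hab.symm, by rwa [Sym2.eq_swap]⟩
    · intro e₁ he₁ e₂ he₂ hfe
      obtain ⟨hm₁, hu₁⟩ := hfP e₁ he₁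
      obtain ⟨hm₂, hu₂⟩ := hfP e₂ he₂
      exact hu₂ e₁ he₁ (hfe ▸ hm₁)
  -- assemble
  have hcardT : T.ncard + Tᶜ.ncard = Fintype.card V := by
    rw [← Nat.card_eq_fintype_card]
    exact Set.ncard_add_ncard_compl T
  calc B.ncard ≤ (Bm ∪ Bs ∪ Bg).ncard := Set.ncard_le_ncard hcover (Set.toFinite _)
  _ ≤ (Bm ∪ Bs).ncard + Bg.ncard := Set.ncard_union_le _ _
  _ ≤ Bm.ncard + Bs.ncard + Bg.ncard := by
      have := Set.ncard_union_le Bm Bs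
      omega
  _ ≤ 2 * Fintype.card V + indepNum G := by omega

/-- With `n = |V(G)|`, the graph `G'` obtained from `G` by attaching to each vertex `v_i` the
path gadget `x_i z_i y_i` with the extra edge `z_i v_i` satisfies `ρₑᵒ(G') = 2n + α(G)`. -/
theorem stmt13 [Fintype V] (G : SimpleGraph V) (n : ℕ) (hn : n = Fintype.card V) :
    eopNum (primeGraph G) = 2 * n + indepNum G := by
  subst hn
  apply le_antisymm
  · apply csSup_le
    · exact ⟨0, ∅, ⟨Set.empty_subset _, by simp⟩, by simp⟩
    · rintro m ⟨B, hB, rfl⟩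
      exact eop_upper G B hB
  · exact eop_lower G
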